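/- Let A be a 2n×2n matrix skew-symmetric along the anti-diagonal with Pfaffian Q defined by row-expansion along a fixed row m: Q = Σ_{j=1}^{2n} (-1)^{m+j*} sign(m,j) a_{m,j*} Q_{mj,j*m*}. Then column-expansion along a fixed column index also gives Q: for any fixed j, Q = Σ_{m=1}^{2n} (-1)^{m+j*} sign(m,j) a_{m,j*} Q_{mj,j*m*}. -/

import Mathlib

open Finset

/-- sign(i,j) = 1 if i<j, -1 if i>j, 0 if i=j. -/
def signp (i j : ℕ) : ℤ := if i < j then 1 else if j < i then -1 else 0

/-- The Pfaffian of the submatrix of `A` with rows `S` and columns `star '' S`,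
defined by the recursive Laplace-like expansion along the smallest row index. -/
noncomputable def pf {R : Type*} [CommRing R] (star : ℕ → ℕ) (A : ℕ → ℕ → R) :
    Finset ℕ → R := fun S =>
  if hS : S.Nonempty then
    have hm : S.min' hS ∈ S := S.min'_mem hS
    ∑ j ∈ S.erase (S.min' hS),
      (-1 : R) ^ (S.min' hS + star j) * (signp (S.min' hS) j : R) *
        A (S.min' hS) (star j) * pf star A ((S.erase (S.min' hS)).erase j)
  else 1
termination_by S => S.card
decreasing_by
  exact lt_of_le_of_lt (Finset.card_le_card (Finset.erase_subset _ _))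
    (Finset.card_erase_lt_of_mem hm)

section Aux
variable {R : Type*} [CommRing R]

lemma pf_expand (star : ℕ → ℕ) (A : ℕ → ℕ → R) (S : Finset ℕ) (hS : S.Nonempty) :
    pf star A S = ∑ j ∈ S.erase (S.min' hS),
      (-1 : R) ^ (S.min' hS + star j) * (signp (S.min' hS) j : R) *
        A (S.min' hS) (star j) * pf star A ((S.erase (S.min' hS)).erase j) := by
  rw [pf, dif_pos hS]

lemma signp_swap (i j : ℕ) : signp i j = - signp j i := by
  unfold signp; split_ifs <;> omega

lemma neg_one_pow_mod (c : ℕ) : (-1 : R) ^ c = (-1) ^ (c % 2) := by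
  conv_lhs => rw [← Nat.div_add_mod c 2]
  rw [pow_add, pow_mul]
  simp

lemma neg_one_pow_congr_mod {a b : ℕ} (h : a % 2 = b % 2) : (-1 : R) ^ a = (-1) ^ b := by
  rw [neg_one_pow_mod a, neg_one_pow_mod b, h]

/-- The coefficient in the expansion. -/
def E (n : ℕ) (A : ℕ → ℕ → R) (m i : ℕ) : R :=
  (-1 : R) ^ (m + (2 * n + 1 - i)) * (signp m i : R) * A m (2 * n + 1 - i)

lemma E_symm (n : ℕ) (A : ℕ → ℕ → R)
    (hA : ∀ i j, 1 ≤ i → i ≤ 2 * n → 1 ≤ j → j ≤ 2 * n →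
      A i j = - A (2 * n + 1 - j) (2 * n + 1 - i))
    {m i : ℕ} (hm : m ∈ Finset.Icc 1 (2 * n)) (hi : i ∈ Finset.Icc 1 (2 * n)) :
    E n A m i = E n A i m := by
  simp only [Finset.mem_Icc] at hm hi
  rcases eq_or_ne m i with rfl | hne
  · rfl
  · have h1 : A m (2 * n + 1 - i) = - A i (2 * n + 1 - m) := by
      have := hA m (2 * n + 1 - i) hm.1 hm.2 (by omega) (by omega)
      rw [this]
      congr 2
      omega
    have h2 : ((signp m i : ℤ) : R) = -((signp i m : ℤ) : R) := by
      rw [signp_swap m i]; push_cast; ring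
    have h3 : (-1 : R) ^ (m + (2 * n + 1 - i)) = (-1) ^ (i + (2 * n + 1 - m)) := by
      apply neg_one_pow_congr_mod; omega
    unfold E
    rw [h1, h2, h3]; ring


end Aux

section Aux2
variable {R : Type*} [CommRing R]

lemma pf_expandE (n : ℕ) (A : ℕ → ℕ → R) (S : Finset ℕ) (hS : S.Nonempty) :
    pf (fun k => 2*n+1-k) A S = ∑ j ∈ S.erase (S.min' hS),
      E n A (S.min' hS) j * pf (fun k => 2*n+1-k) A ((S.erase (S.min' hS)).erase j) :=
  pf_expand _ A S hS

lemma pf_row (n : ℕ) (A : ℕ → ℕ → R)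
    (hA : ∀ i j, 1 ≤ i → i ≤ 2 * n → 1 ≤ j → j ≤ 2 * n →
      A i j = - A (2 * n + 1 - j) (2 * n + 1 - i))
    (S : Finset ℕ) (hSsub : S ⊆ Finset.Icc 1 (2 * n)) (m : ℕ) (hm : m ∈ S) :
    pf (fun k => 2*n+1-k) A S
      = ∑ i ∈ S.erase m, E n A m i * pf (fun k => 2*n+1-k) A ((S.erase m).erase i) := by
  induction S using Finset.strongInduction generalizing m with
  | _ S IH =>
  have hne : S.Nonempty := ⟨m, hm⟩
  have hm₀S : S.min' hne ∈ S := S.min'_mem hne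
  rcases eq_or_ne m (S.min' hne) with rfl | hmm
  · exact pf_expandE n A S hne
  · have hmm₀ : m ∈ S.erase (S.min' hne) := mem_erase.2 ⟨hmm, hm⟩
    have hm₀m : S.min' hne ∈ S.erase m := mem_erase.2 ⟨hmm.symm, hm₀S⟩
    rw [pf_expandE n A S hne, ← Finset.sum_erase_add _ _ hmm₀,
        ← Finset.sum_erase_add _ _ hm₀m,
        show (S.erase m).erase (S.min' hne) = (S.erase (S.min' hne)).erase m from by
          ext x; simp only [mem_erase]; tauto]
    congr 1
    · -- double sums
      have step1 : ∀ j ∈ (S.erase (S.min' hne)).erase m,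
          E n A (S.min' hne) j * pf (fun k => 2*n+1-k) A ((S.erase (S.min' hne)).erase j)
          = ∑ i ∈ ((S.erase (S.min' hne)).erase m).erase j,
              E n A (S.min' hne) j * (E n A m i *
                pf (fun k => 2*n+1-k) A ((((S.erase (S.min' hne)).erase m).erase j).erase i)) := by
        intro j hj
        obtain ⟨hjm, hjm₀, hjS⟩ : j ≠ m ∧ j ≠ S.min' hne ∧ j ∈ S := by
          have h1 := mem_erase.1 hj
          have h2 := mem_erase.1 h1.2
          exact ⟨h1.1, h2.1, h2.2⟩
        have hsub : (S.erase (S.min' hne)).erase j ⊂ S :=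
          Finset.ssubset_of_subset_of_ssubset (erase_subset _ _) (Finset.erase_ssubset hm₀S)
        have hmem : m ∈ (S.erase (S.min' hne)).erase j := mem_erase.2 ⟨hjm.symm, hmm₀⟩
        rw [IH _ hsub (hsub.subset.trans hSsub) m hmem, Finset.mul_sum,
          show ((S.erase (S.min' hne)).erase j).erase m
              = ((S.erase (S.min' hne)).erase m).erase j from by
            ext x; simp only [mem_erase]; tauto]
      have step2 : ∀ i ∈ (S.erase (S.min' hne)).erase m,
          E n A m i * pf (fun k => 2*n+1-k) A ((S.erase m).erase i)
          = ∑ j ∈ ((S.erase (S.min' hne)).erase m).erase i,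
              E n A m i * (E n A (S.min' hne) j *
                pf (fun k => 2*n+1-k) A ((((S.erase (S.min' hne)).erase m).erase i).erase j)) := by
        intro i hi
        obtain ⟨him, him₀, hiS⟩ : i ≠ m ∧ i ≠ S.min' hne ∧ i ∈ S := by
          have h1 := mem_erase.1 hi
          have h2 := mem_erase.1 h1.2
          exact ⟨h1.1, h2.1, h2.2⟩
        have hsub : (S.erase m).erase i ⊂ S :=
          Finset.ssubset_of_subset_of_ssubset (erase_subset _ _) (Finset.erase_ssubset hm)
        have hmem : S.min' hne ∈ (S.erase m).erase i := mem_erase.2 ⟨him₀.symm, hm₀m⟩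
        rw [IH _ hsub (hsub.subset.trans hSsub) _ hmem, Finset.mul_sum,
          show ((S.erase m).erase i).erase (S.min' hne)
              = ((S.erase (S.min' hne)).erase m).erase i from by
            ext x; simp only [mem_erase]; tauto]
      rw [Finset.sum_congr rfl step1, Finset.sum_congr rfl step2]
      rw [Finset.sum_comm' (s := (S.erase (S.min' hne)).erase m)
        (t := fun j => ((S.erase (S.min' hne)).erase m).erase j)
        (t' := (S.erase (S.min' hne)).erase m)
        (s' := fun i => ((S.erase (S.min' hne)).erase m).erase i)
        (by
        intro j i
        simp only [mem_erase]
        tauto)]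
      apply Finset.sum_congr rfl
      intro i _
      apply Finset.sum_congr rfl
      intro j _
      rw [show (((S.erase (S.min' hne)).erase m).erase j).erase i
            = (((S.erase (S.min' hne)).erase m).erase i).erase j from by
          ext x; simp only [mem_erase]; tauto]
      ring
    · rw [E_symm n A hA (hSsub hm₀S) (hSsub hm)]

end Aux2

/-- for a `2n × 2n` matrix skew-symmetric along the anti-diagonal,
the Pfaffian is also given by the column-expansion along any fixed index `j`:
`Q = Σ_m (-1)^{m+j*} sign(m,j) a_{m,j*} Q_{mj,j*m*}`. -/
theorem pfaffian_column_expansion {R : Type*} [CommRing R]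
    (n : ℕ) (hn : 1 ≤ n) (A : ℕ → ℕ → R)
    (hA : ∀ i j, 1 ≤ i → i ≤ 2 * n → 1 ≤ j → j ≤ 2 * n →
      A i j = - A (2 * n + 1 - j) (2 * n + 1 - i))
    (j : ℕ) (hj : j ∈ Finset.Icc 1 (2 * n)) :
    pf (fun k => 2 * n + 1 - k) A (Finset.Icc 1 (2 * n)) =
      ∑ m ∈ (Finset.Icc 1 (2 * n)).erase j,
        (-1 : R) ^ (m + (2 * n + 1 - j)) * (signp m j : R) * A m (2 * n + 1 - j) *
          pf (fun k => 2 * n + 1 - k) A (((Finset.Icc 1 (2 * n)).erase m).erase j) := by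
  rw [pf_row n A hA _ (subset_refl _) j hj]
  apply Finset.sum_congr rfl
  intro m hm
  have hmI : m ∈ Finset.Icc 1 (2 * n) := mem_of_mem_erase hm
  rw [E_symm n A hA hj hmI,
    show ((Finset.Icc 1 (2 * n)).erase j).erase m
        = ((Finset.Icc 1 (2 * n)).erase m).erase j from by
      ext x; simp only [mem_erase]; tauto]
  rfl
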